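/- The sum over all even b ≥ 0 and even c ≥ 0 of ( ch SST_n(λ(0,b,c)) − ch SST_n(λ(0,b,c+1)) ) equals ( Σ_{i=0}^{n} e_i ) · ( Σ_{i=0}^{n} (−1)^i e_i ) in ℤ[x_1,…,x_n]. (When a = 0 every tableau has residue 0, so no residue condition is imposed; all but finitely many summands vanish.) -/

import Mathlib

open MvPolynomial

/-- A semistandard tableau of skew shape `λ(a,b,c) = (2^{b+c},1^a)/(1^b)` with entries in
`{1,…,n}` (encoded as `Fin n`), given as a pair `T = (L, R)` of strictly increasing columns:
`L` of height `a+c` (occupying rows `b+1,…,a+b+c`) and `R` of height `b+c` (occupying rows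
`1,…,b+c`), with the row condition `l_j ≤ r_{b+j}` for `1 ≤ j ≤ c` (here `0`-indexed). -/
def IsTab (n a b c : ℕ) (T : (Fin (a + c) → Fin n) × (Fin (b + c) → Fin n)) : Prop :=
  StrictMono T.1 ∧ StrictMono T.2 ∧
    ∀ (j : ℕ) (_ : j < c) (h2 : j < a + c) (h3 : b + j < b + c),
      T.1 ⟨j, h2⟩ ≤ T.2 ⟨b + j, h3⟩

/-- The tableau obtained from `T` by sliding the right column `R` down by `k` positions
(`0 ≤ k ≤ min{a,b}`) is again semistandard, i.e. `l_j ≤ r_{b+j−k}` for all `1 ≤ j ≤ c+k`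
(here `0`-indexed). -/
def Slides (n a b c : ℕ) (T : (Fin (a + c) → Fin n) × (Fin (b + c) → Fin n)) (k : ℕ) : Prop :=
  k ≤ a ∧ k ≤ b ∧
    ∀ (j : ℕ) (_ : j < c + k) (h2 : j < a + c) (h3 : b + j - k < b + c),
      T.1 ⟨j, h2⟩ ≤ T.2 ⟨b + j - k, h3⟩

/-- The residue `𝔯_T`: the maximal `k` such that sliding `R` down by `k` positions keeps the
tableau semistandard (`k = 0` always qualifies for a semistandard tableau). -/
noncomputable def tabResidue (n a b c : ℕ)
    (T : (Fin (a + c) → Fin n) × (Fin (b + c) → Fin n)) : ℕ :=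
  sSup {k | Slides n a b c T k}

/-- The weight monomial `x^T = (∏_j x_{l_j}) · (∏_i x_{r_i})` of a tableau `T`. -/
noncomputable def tabWt (n a b c : ℕ) (T : (Fin (a + c) → Fin n) × (Fin (b + c) → Fin n)) :
    MvPolynomial (Fin n) ℤ :=
  (∏ j, X (T.1 j)) * (∏ i, X (T.2 i))

/-- The weight generating function `ch X = Σ_{T ∈ X} x^T` of a (finite) set of tableaux. -/
noncomputable def tabCh (n a b c : ℕ)
    (Xs : Set ((Fin (a + c) → Fin n) × (Fin (b + c) → Fin n))) : MvPolynomial (Fin n) ℤ :=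
  ∑ᶠ T ∈ Xs, tabWt n a b c T

/-- The `j`-th elementary symmetric polynomial in `x_1, …, x_n` over `ℤ`, indexed by `j : ℤ`,
with the conventions `e_0 = 1` and `e_j = 0` for `j < 0` or `j > n`. -/
noncomputable def eZ (n : ℕ) (j : ℤ) : MvPolynomial (Fin n) ℤ :=
  if 0 ≤ j then esymm (Fin n) ℤ j.toNat else 0

/-- `E_r = Σ_{i=0}^{n} e_i · e_{r+i}` for `r : ℤ`. -/
noncomputable def EZ (n : ℕ) (r : ℤ) : MvPolynomial (Fin n) ℤ :=
  ∑ i ∈ Finset.range (n + 1), eZ n i * eZ n (r + i)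


open Finset
open scoped Classical

noncomputable section
namespace ChAux
variable {n : ℕ}

/-- number of elements of `A` with value `≥ k` -/
def cnt (A : Finset (Fin n)) (k : ℕ) : ℕ := (A.filter fun a => k ≤ a.val).card

def wt (A : Finset (Fin n)) : MvPolynomial (Fin n) ℤ := ∏ a ∈ A, X a

lemma cnt_zero (A : Finset (Fin n)) : cnt A 0 = A.card := by
  unfold cnt
  rw [filter_true_of_mem]; intro a _; exact Nat.zero_le _

lemma cnt_of_ge (A : Finset (Fin n)) {k : ℕ} (hk : n ≤ k) : cnt A k = 0 := by
  unfold cnt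
  rw [Finset.card_eq_zero, Finset.filter_eq_empty_iff]
  intro a _
  have := a.isLt; omega

lemma cnt_le_card (A : Finset (Fin n)) (k : ℕ) : cnt A k ≤ A.card :=
  Finset.card_le_card (Finset.filter_subset _ _)

lemma cnt_anti (A : Finset (Fin n)) {k l : ℕ} (h : k ≤ l) : cnt A l ≤ cnt A k := by
  apply Finset.card_le_card
  intro a ha; simp only [mem_filter] at *
  exact ⟨ha.1, le_trans h ha.2⟩

/-- step relation -/
lemma cnt_succ (A : Finset (Fin n)) (k : ℕ) :
    cnt A k = cnt A (k + 1) + (A.filter fun a => a.val = k).card := by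
  unfold cnt
  rw [← Finset.card_union_of_disjoint]
  · congr 1
    ext a; simp only [mem_filter, mem_union]
    constructor
    · rintro ⟨ha, h⟩
      rcases Nat.eq_or_lt_of_le h with h' | h'
      · exact Or.inr ⟨ha, h'.symm⟩
      · exact Or.inl ⟨ha, h'⟩
    · rintro (⟨ha, h⟩ | ⟨ha, h⟩)
      · exact ⟨ha, by omega⟩
      · exact ⟨ha, by omega⟩
  · rw [Finset.disjoint_left]
    intro a ha hb
    simp only [mem_filter] at ha hb
    omega


lemma card_level_le_one (A : Finset (Fin n)) (k : ℕ) :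
    (A.filter fun a => a.val = k).card ≤ 1 := by
  apply Finset.card_le_one.mpr
  intro a ha b hb
  simp only [mem_filter] at ha hb
  exact Fin.ext (by omega)

/-- the difference function `g` -/
def gg (A B : Finset (Fin n)) (k : ℕ) : ℤ := (cnt A k : ℤ) - (cnt B k : ℤ)

lemma gg_step_le (A B : Finset (Fin n)) (k : ℕ) : gg A B k ≤ gg A B (k + 1) + 1 := by
  unfold gg
  have hA := cnt_succ A k
  have hB := cnt_succ B k
  have h1 := card_level_le_one A k
  have h2 := card_level_le_one B k
  omega

lemma gg_step_ge (A B : Finset (Fin n)) (k : ℕ) : gg A B (k + 1) - 1 ≤ gg A B k := by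
  unfold gg
  have hA := cnt_succ A k
  have hB := cnt_succ B k
  have h1 := card_level_le_one A k
  have h2 := card_level_le_one B k
  omega

lemma gg_of_ge (A B : Finset (Fin n)) {k : ℕ} (hk : n ≤ k) : gg A B k = 0 := by
  unfold gg; rw [cnt_of_ge A hk, cnt_of_ge B hk]; ring

/-- swap the parts of `A`, `B` in values `≥ h` -/
def swapTop (h : ℕ) (P : Finset (Fin n) × Finset (Fin n)) : Finset (Fin n) × Finset (Fin n) :=
  ((P.2.filter fun a => h ≤ a.val) ∪ (P.1.filter fun a => a.val < h),
   (P.1.filter fun a => h ≤ a.val) ∪ (P.2.filter fun a => a.val < h))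

lemma swapTop_swapTop (h : ℕ) (P : Finset (Fin n) × Finset (Fin n)) :
    swapTop h (swapTop h P) = P := by
  unfold swapTop
  have hcases : ∀ a : Fin n, h ≤ a.val ∨ a.val < h := fun a => by omega
  ext a <;>
  · simp only [mem_union, mem_filter]
    rcases hcases a with hc | hc <;>
      by_cases hm1 : a ∈ P.1 <;> by_cases hm2 : a ∈ P.2 <;>
        simp [hm1, hm2, hc, Nat.not_le.mpr, Nat.not_le.mp] <;> omega

lemma cnt_swapTop_fst_of_ge (h : ℕ) (P : Finset (Fin n) × Finset (Fin n)) {k : ℕ} (hk : h ≤ k) :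
    cnt (swapTop h P).1 k = cnt P.2 k := by
  unfold swapTop cnt
  rw [filter_union, filter_filter, filter_filter]
  have e1 : (P.2.filter fun a => (h ≤ a.val) ∧ (k ≤ a.val)) = P.2.filter fun a => k ≤ a.val := by
    apply filter_congr; intro a _
    constructor
    · exact fun h' => h'.2
    · exact fun h' => ⟨by omega, h'⟩
  have e2 : (P.1.filter fun a => (a.val < h) ∧ (k ≤ a.val)) = ∅ := by
    rw [Finset.filter_eq_empty_iff]; intro a _; omega
  rw [e1, e2, union_empty]

lemma cnt_split (A : Finset (Fin n)) {k h : ℕ} (hk : k ≤ h) :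
    cnt A k = cnt A h + (A.filter fun a => k ≤ a.val ∧ a.val < h).card := by
  unfold cnt
  rw [← Finset.card_union_of_disjoint]
  · congr 1
    ext a; simp only [mem_filter, mem_union]
    constructor
    · rintro ⟨ha, h'⟩
      by_cases hc : h ≤ a.val
      · exact Or.inl ⟨ha, hc⟩
      · exact Or.inr ⟨ha, h', by omega⟩
    · rintro (⟨ha, h'⟩ | ⟨ha, h', _⟩)
      · exact ⟨ha, by omega⟩
      · exact ⟨ha, h'⟩
  · rw [Finset.disjoint_left]
    intro a ha hb
    simp only [mem_filter] at ha hb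
    omega

lemma cnt_swapTop_fst_of_le (h : ℕ) (P : Finset (Fin n) × Finset (Fin n)) {k : ℕ} (hk : k ≤ h) :
    cnt (swapTop h P).1 k + cnt P.1 h = cnt P.2 h + cnt P.1 k := by
  have hsplit := cnt_split P.1 hk
  have : cnt (swapTop h P).1 k = cnt P.2 h + (P.1.filter fun a => k ≤ a.val ∧ a.val < h).card := by
    unfold swapTop cnt
    have e1 : (P.2.filter fun a => (h ≤ a.val) ∧ (k ≤ a.val)) = P.2.filter fun a => h ≤ a.val := by
      apply filter_congr; intro a _
      constructor
      · exact fun h' => h'.1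
      · exact fun h' => ⟨h', by omega⟩
    have e2 : (P.1.filter fun a => (a.val < h) ∧ (k ≤ a.val))
        = P.1.filter fun a => k ≤ a.val ∧ a.val < h := by
      apply filter_congr; intro a _
      constructor
      · exact fun h' => ⟨h'.2, h'.1⟩
      · exact fun h' => ⟨h'.2, h'.1⟩
    rw [filter_union, filter_filter, filter_filter, e1, e2, Finset.card_union_of_disjoint]
    rw [Finset.disjoint_left]
    intro a ha hb
    simp only [mem_filter] at ha hb
    omega
  omega

lemma swapTop_snd (h : ℕ) (P : Finset (Fin n) × Finset (Fin n)) :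
    (swapTop h P).2 = (swapTop h (P.2, P.1)).1 := rfl

lemma gg_swap (A B : Finset (Fin n)) (k : ℕ) : gg B A k = - gg A B k := by
  unfold gg; ring

lemma gg_swapTop_of_ge (h : ℕ) (P : Finset (Fin n) × Finset (Fin n)) {k : ℕ} (hk : h ≤ k) :
    gg (swapTop h P).1 (swapTop h P).2 k = - gg P.1 P.2 k := by
  unfold gg
  rw [cnt_swapTop_fst_of_ge h P hk, swapTop_snd, cnt_swapTop_fst_of_ge h (P.2, P.1) hk]
  ring

lemma gg_swapTop_of_le (h : ℕ) (P : Finset (Fin n) × Finset (Fin n)) {k : ℕ} (hk : k ≤ h) :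
    gg (swapTop h P).1 (swapTop h P).2 k = gg P.1 P.2 k - 2 * gg P.1 P.2 h := by
  unfold gg
  have h1 := cnt_swapTop_fst_of_le h P hk
  have h2 := cnt_swapTop_fst_of_le h (P.2, P.1) hk
  rw [swapTop_snd]
  simp only at h1 h2
  push_cast
  omega

lemma card_swapTop_fst (h : ℕ) (P : Finset (Fin n) × Finset (Fin n)) :
    ((swapTop h P).1.card : ℤ) = P.1.card - gg P.1 P.2 h := by
  have h1 := cnt_swapTop_fst_of_le h P (Nat.zero_le h)
  rw [cnt_zero, cnt_zero] at h1
  unfold gg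
  push_cast
  omega

lemma card_swapTop_snd (h : ℕ) (P : Finset (Fin n) × Finset (Fin n)) :
    ((swapTop h P).2.card : ℤ) = P.2.card + gg P.1 P.2 h := by
  rw [swapTop_snd]
  have h1 := card_swapTop_fst h (P.2, P.1)
  simp only at h1
  rw [h1, gg_swap]
  ring

lemma wt_split (A : Finset (Fin n)) (h : ℕ) :
    wt A = wt (A.filter fun a => h ≤ a.val) * wt (A.filter fun a => a.val < h) := by
  unfold wt
  rw [← Finset.prod_union]
  · congr 1
    ext a; simp only [mem_union, mem_filter]
    by_cases hc : h ≤ a.val <;> simp [hc] <;> omega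
  · rw [Finset.disjoint_left]
    intro a ha hb
    simp only [mem_filter] at ha hb
    omega

lemma wt_union {A B : Finset (Fin n)} (hd : Disjoint A B) : wt (A ∪ B) = wt A * wt B := by
  unfold wt; exact Finset.prod_union hd

lemma wt_swapTop (h : ℕ) (P : Finset (Fin n) × Finset (Fin n)) :
    wt (swapTop h P).1 * wt (swapTop h P).2 = wt P.1 * wt P.2 := by
  have d1 : Disjoint (P.2.filter fun a => h ≤ a.val) (P.1.filter fun a => a.val < h) := by
    rw [Finset.disjoint_left]; intro a ha hb
    simp only [mem_filter] at ha hb; omega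
  have d2 : Disjoint (P.1.filter fun a => h ≤ a.val) (P.2.filter fun a => a.val < h) := by
    rw [Finset.disjoint_left]; intro a ha hb
    simp only [mem_filter] at ha hb; omega
  show wt (_ ∪ _) * wt (_ ∪ _) = _
  rw [wt_union d1, wt_union d2, wt_split P.1 h, wt_split P.2 h]
  ring


lemma max_getD_eq {s : Finset ℕ} {h : ℕ} (hm : h ∈ s) (hb : ∀ x ∈ s, x ≤ h) :
    s.max.getD 0 = h := by
  have h1 : s.max = (h : WithBot ℕ) := by
    apply le_antisymm
    · exact Finset.max_le (fun a ha => WithBot.coe_le_coe.mpr (hb a ha))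
    · exact Finset.le_max hm
  rw [h1]; rfl

def cut1 (P : Finset (Fin n) × Finset (Fin n)) : ℕ :=
  (((range n).filter fun k => 1 ≤ gg P.1 P.2 k).max).getD 0

def cut2 (P : Finset (Fin n) × Finset (Fin n)) : ℕ :=
  (((range n).filter fun k => gg P.1 P.2 k ≤ -1).max).getD 0

def Phi (P : Finset (Fin n) × Finset (Fin n)) := swapTop (cut1 P) P
def Psi (P : Finset (Fin n) × Finset (Fin n)) := swapTop (cut2 P) P

lemma mem_range_of_gg_pos {P : Finset (Fin n) × Finset (Fin n)} (k : ℕ)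
    (h : ¬ gg P.1 P.2 k = 0) : k < n := by
  by_contra hc
  exact h (gg_of_ge _ _ (by omega))

lemma cut1_spec {P : Finset (Fin n) × Finset (Fin n)} (hex : ∃ k, 1 ≤ gg P.1 P.2 k) :
    gg P.1 P.2 (cut1 P) = 1 ∧ (∀ k, cut1 P < k → gg P.1 P.2 k ≤ 0) ∧ cut1 P < n := by
  obtain ⟨k₀, hk₀⟩ := hex
  set s := (range n).filter fun k => 1 ≤ gg P.1 P.2 k with hs
  have hne : s.Nonempty := ⟨k₀, by
    simp only [hs, mem_filter, mem_range]
    exact ⟨mem_range_of_gg_pos (P := P) k₀ (by intro h0; omega), hk₀⟩⟩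
  have hmem : cut1 P ∈ s := by
    have := Finset.max_mem_image_coe hne
    unfold cut1
    rw [← hs]
    obtain ⟨m, hm⟩ := Finset.max_of_nonempty hne
    rw [hm]
    have := Finset.mem_of_max hm
    exact this
  have hub : ∀ x ∈ s, x ≤ cut1 P := by
    intro x hx
    unfold cut1; rw [← hs]
    obtain ⟨m, hm⟩ := Finset.max_of_nonempty hne
    rw [hm]
    have := Finset.le_max_of_eq hx hm
    exact this
  simp only [hs, mem_filter, mem_range] at hmem
  have habove : ∀ k, cut1 P < k → gg P.1 P.2 k ≤ 0 := by
    intro k hk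
    by_contra hc
    push_neg at hc
    have hkn : k < n := mem_range_of_gg_pos (P := P) k (by intro h0; omega)
    have : k ≤ cut1 P := hub k (by simp only [hs, mem_filter, mem_range]; exact ⟨hkn, by omega⟩)
    omega
  refine ⟨?_, habove, hmem.1⟩
  have h1 := gg_step_le P.1 P.2 (cut1 P)
  have h2 := habove (cut1 P + 1) (by omega)
  omega

lemma cut2_spec {P : Finset (Fin n) × Finset (Fin n)} (hex : ∃ k, gg P.1 P.2 k ≤ -1) :
    gg P.1 P.2 (cut2 P) = -1 ∧ (∀ k, cut2 P < k → 0 ≤ gg P.1 P.2 k) ∧ cut2 P < n := by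
  obtain ⟨k₀, hk₀⟩ := hex
  set s := (range n).filter fun k => gg P.1 P.2 k ≤ -1 with hs
  have hne : s.Nonempty := ⟨k₀, by
    simp only [hs, mem_filter, mem_range]
    exact ⟨mem_range_of_gg_pos (P := P) k₀ (by intro h0; omega), hk₀⟩⟩
  have hmem : cut2 P ∈ s := by
    unfold cut2; rw [← hs]
    obtain ⟨m, hm⟩ := Finset.max_of_nonempty hne
    rw [hm]
    have := Finset.mem_of_max hm
    exact this
  have hub : ∀ x ∈ s, x ≤ cut2 P := by
    intro x hx
    unfold cut2; rw [← hs]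
    obtain ⟨m, hm⟩ := Finset.max_of_nonempty hne
    rw [hm]
    have := Finset.le_max_of_eq hx hm
    exact this
  simp only [hs, mem_filter, mem_range] at hmem
  have habove : ∀ k, cut2 P < k → 0 ≤ gg P.1 P.2 k := by
    intro k hk
    by_contra hc
    push_neg at hc
    have hkn : k < n := mem_range_of_gg_pos (P := P) k (by intro h0; omega)
    have : k ≤ cut2 P := hub k (by simp only [hs, mem_filter, mem_range]; exact ⟨hkn, by omega⟩)
    omega
  refine ⟨?_, habove, hmem.1⟩
  have h1 := gg_step_ge P.1 P.2 (cut2 P)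
  have h2 := habove (cut2 P + 1) (by omega)
  omega

lemma cut2_Phi {P : Finset (Fin n) × Finset (Fin n)} (hex : ∃ k, 1 ≤ gg P.1 P.2 k) :
    cut2 (Phi P) = cut1 P := by
  obtain ⟨h1, h2, h3⟩ := cut1_spec hex
  unfold cut2 Phi
  apply max_getD_eq
  · simp only [mem_filter, mem_range]
    refine ⟨h3, ?_⟩
    rw [gg_swapTop_of_ge _ _ (le_refl _), h1]
  · intro x hx
    simp only [mem_filter, mem_range] at hx
    by_contra hc
    push_neg at hc
    rw [gg_swapTop_of_ge _ _ (by omega)] at hx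
    have := h2 x (by omega)
    omega

lemma cut1_Psi {P : Finset (Fin n) × Finset (Fin n)} (hex : ∃ k, gg P.1 P.2 k ≤ -1) :
    cut1 (Psi P) = cut2 P := by
  obtain ⟨h1, h2, h3⟩ := cut2_spec hex
  unfold cut1 Psi
  apply max_getD_eq
  · simp only [mem_filter, mem_range]
    refine ⟨h3, ?_⟩
    rw [gg_swapTop_of_ge _ _ (le_refl _), h1]
    norm_num
  · intro x hx
    simp only [mem_filter, mem_range] at hx
    by_contra hc
    push_neg at hc
    rw [gg_swapTop_of_ge _ _ (by omega)] at hx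
    have := h2 x (by omega)
    omega


def P2 (c m : ℕ) : Finset ((Finset (Fin n)) × (Finset (Fin n))) :=
  powersetCard c (univ : Finset (Fin n)) ×ˢ powersetCard m univ

def goodCond (P : Finset (Fin n) × Finset (Fin n)) : Prop := ∀ k, cnt P.1 k ≤ cnt P.2 k

lemma mem_P2 {c m : ℕ} {P : Finset (Fin n) × Finset (Fin n)} :
    P ∈ P2 c m ↔ P.1.card = c ∧ P.2.card = m := by
  unfold P2
  rw [Finset.mem_product, Finset.mem_powersetCard_univ, Finset.mem_powersetCard_univ]

lemma esymm_eq_sum_wt (k : ℕ) :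
    esymm (Fin n) ℤ k = ∑ A ∈ powersetCard k (univ : Finset (Fin n)), wt A := rfl

lemma sum_P2 (c m : ℕ) :
    ∑ P ∈ P2 c m, wt P.1 * wt P.2 = esymm (Fin n) ℤ c * esymm (Fin n) ℤ m := by
  rw [esymm_eq_sum_wt, esymm_eq_sum_wt, Finset.sum_mul_sum]
  unfold P2
  rw [Finset.sum_product]

lemma viol_eq (b c : ℕ) :
    ∑ P ∈ (P2 (n := n) (c+1) (b+(c+1))).filter (fun P => ¬ goodCond P), wt P.1 * wt P.2
      = ∑ Q ∈ P2 (n := n) c (b+c+2), wt Q.1 * wt Q.2 := by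
  have hexP : ∀ P ∈ (P2 (n := n) (c+1) (b+(c+1))).filter (fun P => ¬ goodCond P),
      ∃ k, 1 ≤ gg P.1 P.2 k := by
    intro P hP
    rw [mem_filter] at hP
    obtain ⟨-, hbad⟩ := hP
    unfold goodCond at hbad
    push_neg at hbad
    obtain ⟨k, hk⟩ := hbad
    exact ⟨k, by unfold gg; omega⟩
  have hexQ : ∀ Q ∈ P2 (n := n) c (b+c+2), ∃ k, gg Q.1 Q.2 k ≤ -1 := by
    intro Q hQ
    rw [mem_P2] at hQ
    refine ⟨0, ?_⟩
    unfold gg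
    rw [cnt_zero, cnt_zero, hQ.1, hQ.2]
    push_cast; omega
  apply Finset.sum_nbij' (i := Phi) (j := Psi)
  · intro P hP
    obtain ⟨hg, -, -⟩ := cut1_spec (hexP P hP)
    rw [mem_filter, mem_P2] at hP
    rw [mem_P2]
    have h1 := card_swapTop_fst (cut1 P) P
    have h2 := card_swapTop_snd (cut1 P) P
    unfold Phi
    constructor
    · have := hP.1.1; omega
    · have := hP.1.2; omega
  · intro Q hQ
    obtain ⟨hg, -, -⟩ := cut2_spec (hexQ Q hQ)
    rw [mem_P2] at hQ
    rw [mem_filter, mem_P2]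
    have h1 := card_swapTop_fst (cut2 Q) Q
    have h2 := card_swapTop_snd (cut2 Q) Q
    refine ⟨⟨?_, ?_⟩, ?_⟩
    · unfold Psi; have := hQ.1; omega
    · unfold Psi; have := hQ.2; omega
    · intro hall
      have hv := hall (cut2 Q)
      have : gg (Psi Q).1 (Psi Q).2 (cut2 Q) = 1 := by
        unfold Psi
        rw [gg_swapTop_of_ge _ _ (le_refl _), hg]; norm_num
      unfold gg at this
      omega
  · intro P hP
    unfold Psi Phi
    rw [show cut2 (swapTop (cut1 P) P) = cut1 P from cut2_Phi (hexP P hP)]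
    exact swapTop_swapTop _ _
  · intro Q hQ
    unfold Psi Phi
    rw [show cut1 (swapTop (cut2 Q) Q) = cut2 Q from cut1_Psi (hexQ Q hQ)]
    exact swapTop_swapTop _ _
  · intro P hP
    exact (wt_swapTop (cut1 P) P).symm

/-- generating function of interlacing pairs -/
def goodCh (b c : ℕ) : MvPolynomial (Fin n) ℤ :=
  ∑ P ∈ (P2 c (b+c)).filter goodCond, wt P.1 * wt P.2

lemma goodCh_succ (b c : ℕ) :
    goodCh (n := n) b (c+1)
      = esymm (Fin n) ℤ (c+1) * esymm (Fin n) ℤ (b+c+1)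
        - esymm (Fin n) ℤ c * esymm (Fin n) ℤ (b+c+2) := by
  have hsplit := Finset.sum_filter_add_sum_filter_not (P2 (n := n) (c+1) (b+(c+1)))
    goodCond (fun P => wt P.1 * wt P.2)
  rw [viol_eq b c, sum_P2, sum_P2] at hsplit
  unfold goodCh
  have : b + (c + 1) = b + c + 1 := by omega
  rw [this] at hsplit ⊢
  linear_combination hsplit

lemma goodCh_zero (b : ℕ) :
    goodCh (n := n) b 0 = esymm (Fin n) ℤ 0 * esymm (Fin n) ℤ b := by
  unfold goodCh
  rw [← sum_P2]
  congr 1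
  apply Finset.filter_true_of_mem
  intro P hP
  rw [mem_P2] at hP
  intro k
  have h1 : P.1 = ∅ := Finset.card_eq_zero.mp (by omega)
  have : cnt P.1 k = 0 := by
    unfold cnt; rw [h1]; simp
  omega

lemma esymm_eq_zero_of_gt {k : ℕ} (hk : n < k) : esymm (Fin n) ℤ k = 0 := by
  rw [esymm_eq_sum_wt]
  have : powersetCard k (univ : Finset (Fin n)) = ∅ :=
    Finset.powersetCard_eq_empty.mpr (by simpa using hk)
  rw [this, Finset.sum_empty]

lemma goodCh_eq_zero {b c : ℕ} (h : n < c ∨ n < b + c) : goodCh (n := n) b c = 0 := by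
  unfold goodCh
  have : P2 (n := n) c (b + c) = ∅ := by
    unfold P2
    rcases h with h | h
    · rw [show powersetCard c (univ : Finset (Fin n)) = ∅ from
        Finset.powersetCard_eq_empty.mpr (by simpa using h), Finset.empty_product]
    · rw [show powersetCard (b + c) (univ : Finset (Fin n)) = ∅ from
        Finset.powersetCard_eq_empty.mpr (by simpa using h), Finset.product_empty]
  rw [this, Finset.filter_empty, Finset.sum_empty]


lemma card_filter_ge (p j : ℕ) :
    (univ.filter fun i : Fin p => j ≤ i.val).card = p - j := by
  rw [show p - j = (Finset.Ico j p).card from (Nat.card_Ico j p).symm]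
  refine Finset.card_bij' (fun (a : Fin p) _ => a.val)
    (fun k hk => (⟨k, (Finset.mem_Ico.mp hk).2⟩ : Fin p)) ?_ ?_ ?_ ?_
  · intro a ha
    rw [Finset.mem_Ico]
    simp only [mem_filter, mem_univ, true_and] at ha
    exact ⟨ha, a.isLt⟩
  · intro k hk
    simp only [mem_filter, mem_univ, true_and]
    exact (Finset.mem_Ico.mp hk).1
  · intro a _ ; rfl
  · intro k _ ; rfl

lemma cnt_image (p : ℕ) (f : Fin p → Fin n) (hf : Function.Injective f) (k : ℕ) :
    cnt (image f univ) k = (univ.filter fun j : Fin p => k ≤ (f j).val).card := by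
  unfold cnt
  rw [Finset.filter_image]
  rw [Finset.card_image_of_injective _ hf]

lemma cnt_image_le {p q bb : ℕ} (hq : q = bb + p) (f : Fin p → Fin n) (g : Fin q → Fin n)
    (hf : StrictMono f) (hg : StrictMono g)
    (hcond : ∀ (j : ℕ) (h1 : j < p) (h2 : bb + j < q), f ⟨j, h1⟩ ≤ g ⟨bb + j, h2⟩) (k : ℕ) :
    cnt (image f univ) k ≤ cnt (image g univ) k := by
  rw [cnt_image p f hf.injective, cnt_image q g hg.injective]
  apply Finset.card_le_card_of_injOn (fun j => (⟨bb + j.val, by omega⟩ : Fin q))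
  · intro j hj
    simp only [Finset.mem_coe, mem_filter, mem_univ, true_and] at hj ⊢
    have h2 : bb + j.val < q := by omega
    have := hcond j.val j.isLt h2
    have hle : f j ≤ g ⟨bb + j.val, h2⟩ := by
      convert this using 2
    rw [Fin.le_def] at hle
    omega
  · intro a _ b _ hab
    have : bb + a.val = bb + b.val := congrArg Fin.val hab
    exact Fin.ext (by omega)

lemma row_cond_of_cnt {p q bb : ℕ} (hq : q = bb + p) (f : Fin p → Fin n) (g : Fin q → Fin n)
    (hf : StrictMono f) (hg : StrictMono g)
    (hcnt : ∀ k, cnt (image f univ) k ≤ cnt (image g univ) k) :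
    ∀ (j : ℕ) (h1 : j < p) (h2 : bb + j < q), f ⟨j, h1⟩ ≤ g ⟨bb + j, h2⟩ := by
  intro j h1 h2
  set x := (f ⟨j, h1⟩).val with hx
  have hSf : p - j ≤ cnt (image f univ) x := by
    rw [cnt_image p f hf.injective]
    rw [← card_filter_ge p j]
    apply Finset.card_le_card
    intro j' hj'
    simp only [mem_filter, mem_univ, true_and] at hj' ⊢
    have : (⟨j, h1⟩ : Fin p) ≤ j' := by rw [Fin.le_def]; exact hj'
    have := hf.monotone this
    rw [Fin.le_def] at this
    omega
  have hSg : p - j ≤ cnt (image g univ) x := le_trans hSf (hcnt x)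
  by_contra hc
  rw [not_le] at hc
  have hsub : (univ.filter fun i : Fin q => x ≤ (g i).val)
      ⊆ univ.filter fun i : Fin q => bb + j + 1 ≤ i.val := by
    intro i hi
    simp only [mem_filter, mem_univ, true_and] at hi ⊢
    by_contra hc2
    have hle : i ≤ (⟨bb + j, h2⟩ : Fin q) := by rw [Fin.le_def]; simp; omega
    have := hg.monotone hle
    rw [Fin.le_def] at this
    rw [Fin.lt_def] at hc
    omega
  have hcard := Finset.card_le_card hsub
  rw [card_filter_ge q (bb + j + 1)] at hcard
  rw [cnt_image q g hg.injective] at hSg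
  omega

lemma tabCh_eq (b c : ℕ) :
    tabCh n 0 b c {T | IsTab n 0 b c T} = goodCh (n := n) b c := by
  classical
  have hset : {T | IsTab n 0 b c T}
      = ↑(univ.filter (fun T : (Fin (0 + c) → Fin n) × (Fin (b + c) → Fin n) =>
          IsTab n 0 b c T)) := by
    ext T; simp
  unfold tabCh
  rw [hset, finsum_mem_coe_finset]
  unfold goodCh
  have card1 : ∀ Q ∈ (P2 (n := n) c (b+c)).filter goodCond, Q.1.card = 0 + c := by
    intro Q hQ; rw [mem_filter, mem_P2] at hQ; omega
  have card2 : ∀ Q ∈ (P2 (n := n) c (b+c)).filter goodCond, Q.2.card = b + c := by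
    intro Q hQ; rw [mem_filter, mem_P2] at hQ; exact hQ.1.2
  refine Finset.sum_bij'
    (fun T _ => ((image T.1 univ : Finset (Fin n)), (image T.2 univ : Finset (Fin n))))
    (fun Q hQ => (⇑(Q.1.orderEmbOfFin (card1 Q hQ)), ⇑(Q.2.orderEmbOfFin (card2 Q hQ))))
    ?_ ?_ ?_ ?_ ?_
  · -- hi
    intro T hT
    rw [mem_filter] at hT
    obtain ⟨-, h1, h2, h3⟩ := hT
    rw [mem_filter, mem_P2]
    have hc1 : (image T.1 univ).card = c := by
      rw [Finset.card_image_of_injective _ h1.injective, card_univ, Fintype.card_fin]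
      omega
    have hc2 : (image T.2 univ).card = b + c := by
      rw [Finset.card_image_of_injective _ h2.injective, card_univ, Fintype.card_fin]
    refine ⟨⟨hc1, hc2⟩, ?_⟩
    intro k
    apply cnt_image_le (bb := b) (by omega) T.1 T.2 h1 h2
    intro j hj1 hj2
    exact h3 j (by omega) hj1 hj2
  · -- hj
    intro Q hQ
    rw [mem_filter]
    refine ⟨mem_univ _, ?_, ?_, ?_⟩
    · exact (Q.1.orderEmbOfFin _).strictMono
    · exact (Q.2.orderEmbOfFin _).strictMono
    · have him1 : image (⇑(Q.1.orderEmbOfFin (card1 Q hQ))) univ = Q.1 := by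
        apply Finset.coe_injective
        rw [Finset.coe_image, Finset.coe_univ, Set.image_univ, Finset.range_orderEmbOfFin]
      have him2 : image (⇑(Q.2.orderEmbOfFin (card2 Q hQ))) univ = Q.2 := by
        apply Finset.coe_injective
        rw [Finset.coe_image, Finset.coe_univ, Set.image_univ, Finset.range_orderEmbOfFin]
      have hcl := row_cond_of_cnt (bb := b) (by omega)
        (⇑(Q.1.orderEmbOfFin (card1 Q hQ))) (⇑(Q.2.orderEmbOfFin (card2 Q hQ)))
        (Q.1.orderEmbOfFin _).strictMono (Q.2.orderEmbOfFin _).strictMono ?_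
      · intro j _ h2 h3
        exact hcl j h2 h3
      · intro k
        rw [him1, him2]
        rw [mem_filter] at hQ
        exact hQ.2 k
  · -- left_inv
    intro T hT
    rw [mem_filter] at hT
    obtain ⟨-, h1, h2, -⟩ := hT
    refine Prod.ext ?_ ?_
    · exact (Finset.orderEmbOfFin_unique _
        (fun x => mem_image_of_mem _ (mem_univ x)) h1).symm
    · exact (Finset.orderEmbOfFin_unique _
        (fun x => mem_image_of_mem _ (mem_univ x)) h2).symm
  · -- right_inv
    intro Q hQ
    have him1 : image (⇑(Q.1.orderEmbOfFin (card1 Q hQ))) univ = Q.1 := by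
      apply Finset.coe_injective
      rw [Finset.coe_image, Finset.coe_univ, Set.image_univ, Finset.range_orderEmbOfFin]
    have him2 : image (⇑(Q.2.orderEmbOfFin (card2 Q hQ))) univ = Q.2 := by
      apply Finset.coe_injective
      rw [Finset.coe_image, Finset.coe_univ, Set.image_univ, Finset.range_orderEmbOfFin]
    exact Prod.ext him1 him2
  · -- weights
    intro T hT
    rw [mem_filter] at hT
    obtain ⟨-, h1, h2, -⟩ := hT
    unfold tabWt wt
    simp only
    rw [Finset.prod_image (fun x _ y _ h => h1.injective h),
      Finset.prod_image (fun x _ y _ h => h2.injective h)]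


section AltPair
variable {R : Type*} [CommRing R]

lemma alt_pair (G : ℕ → R) (m : ℕ) (hG : ∀ c, m ≤ c → G c = 0) :
    ∑ c ∈ range m, (if Even c then G c - G (c+1) else 0)
      = ∑ c ∈ range (2*m), (-1 : R)^c * G c := by
  have key : ∀ M : ℕ, ∑ c ∈ range (2*M), (if Even c then G c - G (c+1) else 0)
      = ∑ c ∈ range (2*M), (-1 : R)^c * G c := by
    intro M
    induction M with
    | zero => simp
    | succ M ih =>
      have h2 : 2*(M+1) = (2*M + 1) + 1 := by ring
      rw [h2, Finset.sum_range_succ, Finset.sum_range_succ,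
          Finset.sum_range_succ, Finset.sum_range_succ, ih]
      have he : Even (2*M) := even_two_mul M
      have ho : ¬ Even (2*M+1) := by simp [Nat.even_add_one, he]
      rw [if_pos he, if_neg ho, Even.neg_one_pow he, Odd.neg_one_pow (Even.add_one he)]
      ring
  rw [← key m]
  apply Finset.sum_subset
  · exact Finset.range_subset_range.mpr (by omega)
  · intro c hc hcn
    rw [mem_range] at hc
    rw [mem_range, not_lt] at hcn
    rw [hG c (by omega), hG (c+1) (by omega)]
    simp

end AltPair

/-- abbreviation for elementary symmetric polynomials -/
def Ee (k : ℕ) : MvPolynomial (Fin n) ℤ := esymm (Fin n) ℤ k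

def Em : ℕ → MvPolynomial (Fin n) ℤ
  | 0 => 0
  | (c+1) => Ee c

lemma Ee_zero_of_gt {k : ℕ} (hk : n < k) : Ee (n := n) k = 0 := esymm_eq_zero_of_gt hk

lemma goodCh_formula (b c : ℕ) :
    goodCh (n := n) b c = Ee c * Ee (b+c) - Em c * Ee (b+c+1) := by
  cases c with
  | zero =>
    rw [goodCh_zero]
    show Ee 0 * Ee b = Ee 0 * Ee (b + 0) - 0 * Ee (b + 0 + 1)
    rw [Nat.add_zero]
    ring
  | succ c =>
    rw [goodCh_succ]
    show Ee (c+1) * Ee (b+c+1) - Ee c * Ee (b+c+2)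
      = Ee (c+1) * Ee (b+(c+1)) - Ee c * Ee (b+(c+1)+1)
    have e1 : b + (c+1) = b + c + 1 := by omega
    rw [e1]

/-- the inner alternating sum -/
lemma inner_sum (b : ℕ) :
    ∑ c ∈ range (n+1), (if Even c then goodCh (n := n) b c - goodCh b (c+1) else 0)
      = (∑ c ∈ range (n+1), (-1 : MvPolynomial (Fin n) ℤ)^c * (Ee c * Ee (b+c)))
        + ∑ c ∈ range (n+1), (-1 : MvPolynomial (Fin n) ℤ)^c * (Ee c * Ee (b+c+2)) := by
  rw [alt_pair (fun c => goodCh (n := n) b c) (n+1)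
    (fun c hc => goodCh_eq_zero (Or.inl (by omega)))]
  have hsplit : ∀ c, (-1 : MvPolynomial (Fin n) ℤ)^c * goodCh (n := n) b c
      = (-1 : MvPolynomial (Fin n) ℤ)^c * (Ee c * Ee (b+c))
        - (-1 : MvPolynomial (Fin n) ℤ)^c * (Em c * Ee (b+c+1)) := by
    intro c
    rw [goodCh_formula]
    ring
  rw [Finset.sum_congr rfl (fun c _ => hsplit c), Finset.sum_sub_distrib]
  have hshift : ∑ c ∈ range (2*(n+1)), (-1 : MvPolynomial (Fin n) ℤ)^c * (Em c * Ee (b+c+1))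
      = - ∑ c ∈ range (2*n+1), (-1 : MvPolynomial (Fin n) ℤ)^c * (Ee c * Ee (b+c+2)) := by
    have h2 : 2*(n+1) = (2*n+1) + 1 := by ring
    rw [h2, Finset.sum_range_succ']
    have e0 : (-1 : MvPolynomial (Fin n) ℤ)^0 * (Em 0 * Ee (b+0+1)) = 0 := by
      show (-1 : MvPolynomial (Fin n) ℤ)^0 * ((0 : MvPolynomial (Fin n) ℤ) * Ee (b+0+1)) = 0
      ring
    rw [e0, add_zero, ← Finset.sum_neg_distrib]
    apply Finset.sum_congr rfl
    intro c _
    show (-1 : MvPolynomial (Fin n) ℤ)^(c+1) * (Ee c * Ee (b+(c+1)+1)) = _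
    have e1 : b + (c+1) + 1 = b + c + 2 := by omega
    rw [e1, pow_succ]
    ring
  rw [hshift]
  have hshrink1 : ∑ c ∈ range (2*(n+1)), (-1 : MvPolynomial (Fin n) ℤ)^c * (Ee c * Ee (b+c))
      = ∑ c ∈ range (n+1), (-1 : MvPolynomial (Fin n) ℤ)^c * (Ee c * Ee (b+c)) := by
    symm
    apply Finset.sum_subset (Finset.range_subset_range.mpr (by omega))
    intro c hc hcn
    rw [mem_range, not_lt] at hcn
    rw [Ee_zero_of_gt (by omega)]
    ring
  have hshrink2 : ∑ c ∈ range (2*n+1), (-1 : MvPolynomial (Fin n) ℤ)^c * (Ee c * Ee (b+c+2))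
      = ∑ c ∈ range (n+1), (-1 : MvPolynomial (Fin n) ℤ)^c * (Ee c * Ee (b+c+2)) := by
    symm
    apply Finset.sum_subset (Finset.range_subset_range.mpr (by omega))
    intro c hc hcn
    rw [mem_range, not_lt] at hcn
    rw [Ee_zero_of_gt (n := n) (by omega)]
    ring
  rw [hshrink1, hshrink2]
  ring


lemma SA_eq :
    ∑ b ∈ range (n+1), (if Even b then
        ∑ c ∈ range (n+1), (-1 : MvPolynomial (Fin n) ℤ)^c * (Ee c * Ee (b+c)) else 0)
      = (∑ i ∈ range (n+1), (-1 : MvPolynomial (Fin n) ℤ)^i * (Ee i * Ee i))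
        + ∑ p ∈ ((range (n+1)) ×ˢ (range (n+1))).filter
            (fun p => p.1 < p.2 ∧ Even (p.2 - p.1)),
            (-1 : MvPolynomial (Fin n) ℤ)^p.1 * (Ee p.1 * Ee p.2) := by
  rw [← Finset.sum_filter]
  rw [← Finset.sum_product' (s := (range (n+1)).filter (fun b => Even b)) (t := range (n+1))
    (f := fun b c => (-1 : MvPolynomial (Fin n) ℤ)^c * (Ee c * Ee (b+c)))]
  have hT : ((range (n+1)).filter (fun b => Even b)) ×ˢ (range (n+1))
      = ((range (n+1)) ×ˢ (range (n+1))).filter (fun p => Even p.1) := by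
    ext p
    simp only [Finset.mem_product, mem_filter]
    tauto
  rw [hT]
  rw [← Finset.sum_filter_add_sum_filter_not
    (((range (n+1)) ×ˢ (range (n+1))).filter (fun p => Even p.1)) (fun p => p.1 = 0)]
  refine congrArg₂ (· + ·) ?_ ?_
  · -- diagonal part
    refine Finset.sum_nbij' (fun p => p.2) (fun c => ((0 : ℕ), c)) ?_ ?_ ?_ ?_ ?_
    · intro p hp
      simp [mem_filter, Finset.mem_product, mem_range, Nat.even_iff] at hp ⊢ <;> omega
    · intro c hc
      simp [mem_filter, Finset.mem_product, mem_range, Nat.even_iff] at hc ⊢ <;> omega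
    · intro p hp
      simp only [mem_filter, Finset.mem_product, mem_range, Nat.even_iff] at hp
      exact Prod.ext (by dsimp only; omega) rfl
    · intro c _ ; rfl
    · intro p hp
      simp only [mem_filter] at hp
      rw [hp.2]
      simp
  · -- off-diagonal part
    rw [show (((range (n+1)) ×ˢ (range (n+1))).filter (fun p => Even p.1)).filter
        (fun p => ¬ p.1 = 0)
      = ((range (n+1)) ×ˢ (range (n+1))).filter (fun p => Even p.1 ∧ ¬ p.1 = 0)
      from Finset.filter_filter _ _ _]
    rw [← Finset.sum_filter_add_sum_filter_not
      (((range (n+1)) ×ˢ (range (n+1))).filter (fun p => Even p.1 ∧ ¬ p.1 = 0))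
      (fun p => p.1 + p.2 < n+1)]
    have hzero : ∑ p ∈ (((range (n+1)) ×ˢ (range (n+1))).filter
        (fun p => Even p.1 ∧ ¬ p.1 = 0)).filter (fun p => ¬ (p.1 + p.2 < n+1)),
        (-1 : MvPolynomial (Fin n) ℤ)^p.2 * (Ee p.2 * Ee (p.1+p.2)) = 0 := by
      apply Finset.sum_eq_zero
      intro p hp
      simp only [mem_filter] at hp
      rw [Ee_zero_of_gt (n := n) (k := p.1 + p.2) (by omega)]
      ring
    rw [hzero, add_zero]
    refine Finset.sum_nbij' (fun p => (p.2, p.1 + p.2)) (fun q => (q.2 - q.1, q.1))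
      ?_ ?_ ?_ ?_ ?_
    · intro p hp
      simp only [mem_filter, Finset.mem_product, mem_range] at hp ⊢
      obtain ⟨⟨⟨hb, hc⟩, hev, hne⟩, hlt⟩ := hp
      refine ⟨⟨hc, by omega⟩, by omega, ?_⟩
      have : p.1 + p.2 - p.2 = p.1 := by omega
      rw [this]
      exact hev
    · intro q hq
      simp only [mem_filter, Finset.mem_product, mem_range] at hq ⊢
      obtain ⟨⟨hi, hj⟩, hlt, hev⟩ := hq
      have hev' := Nat.even_iff.mp hev
      refine ⟨⟨⟨by omega, hi⟩, Nat.even_iff.mpr (by omega), by omega⟩, by omega⟩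
    · intro p hp
      simp only [mem_filter, Finset.mem_product, mem_range] at hp
      exact Prod.ext (by dsimp only; omega) rfl
    · intro q hq
      simp only [mem_filter, Finset.mem_product, mem_range] at hq
      exact Prod.ext rfl (by dsimp only; omega)
    · intro p _ ; rfl

lemma SB_eq :
    ∑ b ∈ range (n+1), (if Even b then
        ∑ c ∈ range (n+1), (-1 : MvPolynomial (Fin n) ℤ)^c * (Ee c * Ee (b+c+2)) else 0)
      = ∑ p ∈ ((range (n+1)) ×ˢ (range (n+1))).filter
            (fun p => p.1 < p.2 ∧ Even (p.2 - p.1)),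
            (-1 : MvPolynomial (Fin n) ℤ)^p.1 * (Ee p.1 * Ee p.2) := by
  rw [← Finset.sum_filter]
  rw [← Finset.sum_product' (s := (range (n+1)).filter (fun b => Even b)) (t := range (n+1))
    (f := fun b c => (-1 : MvPolynomial (Fin n) ℤ)^c * (Ee c * Ee (b+c+2)))]
  have hT : ((range (n+1)).filter (fun b => Even b)) ×ˢ (range (n+1))
      = ((range (n+1)) ×ˢ (range (n+1))).filter (fun p => Even p.1) := by
    ext p
    simp only [Finset.mem_product, mem_filter]
    tauto
  rw [hT]
  rw [← Finset.sum_filter_add_sum_filter_not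
    (((range (n+1)) ×ˢ (range (n+1))).filter (fun p => Even p.1))
    (fun p => p.1 + p.2 + 2 < n+1)]
  have hzero : ∑ p ∈ (((range (n+1)) ×ˢ (range (n+1))).filter
      (fun p => Even p.1)).filter (fun p => ¬ (p.1 + p.2 + 2 < n+1)),
      (-1 : MvPolynomial (Fin n) ℤ)^p.2 * (Ee p.2 * Ee (p.1+p.2+2)) = 0 := by
    apply Finset.sum_eq_zero
    intro p hp
    simp only [mem_filter] at hp
    rw [Ee_zero_of_gt (n := n) (k := p.1 + p.2 + 2) (by omega)]
    ring
  rw [hzero, add_zero]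
  refine Finset.sum_nbij' (fun p => (p.2, p.1 + p.2 + 2)) (fun q => (q.2 - q.1 - 2, q.1))
    ?_ ?_ ?_ ?_ ?_
  · intro p hp
    simp only [mem_filter, Finset.mem_product, mem_range] at hp ⊢
    obtain ⟨⟨⟨hb, hc⟩, hev⟩, hlt⟩ := hp
    refine ⟨⟨hc, by omega⟩, by omega, ?_⟩
    have : p.1 + p.2 + 2 - p.2 = p.1 + 2 := by omega
    rw [this]
    have := Nat.even_iff.mp hev
    exact Nat.even_iff.mpr (by omega)
  · intro q hq
    simp only [mem_filter, Finset.mem_product, mem_range] at hq ⊢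
    obtain ⟨⟨hi, hj⟩, hlt, hev⟩ := hq
    have hev' := Nat.even_iff.mp hev
    have h2 : 2 ≤ q.2 - q.1 := by omega
    refine ⟨⟨⟨by omega, hi⟩, Nat.even_iff.mpr (by omega)⟩, by omega⟩
  · intro p hp
    simp only [mem_filter, Finset.mem_product, mem_range] at hp
    exact Prod.ext (by dsimp only; omega) rfl
  · intro q hq
    simp only [mem_filter, Finset.mem_product, mem_range] at hq
    have hev' := Nat.even_iff.mp hq.2.2
    exact Prod.ext rfl (by dsimp only; omega)
  · intro p _ ; rfl

lemma RHS_eq :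
    (∑ i ∈ range (n+1), Ee (n := n) i)
        * (∑ i ∈ range (n+1), (-1 : MvPolynomial (Fin n) ℤ)^i * Ee i)
      = (∑ i ∈ range (n+1), (-1 : MvPolynomial (Fin n) ℤ)^i * (Ee i * Ee i))
        + ((∑ p ∈ ((range (n+1)) ×ˢ (range (n+1))).filter
            (fun p => p.1 < p.2 ∧ Even (p.2 - p.1)),
            (-1 : MvPolynomial (Fin n) ℤ)^p.1 * (Ee p.1 * Ee p.2))
          + ∑ p ∈ ((range (n+1)) ×ˢ (range (n+1))).filter
            (fun p => p.1 < p.2 ∧ Even (p.2 - p.1)),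
            (-1 : MvPolynomial (Fin n) ℤ)^p.1 * (Ee p.1 * Ee p.2)) := by
  rw [Finset.sum_mul_sum]
  rw [← Finset.sum_product' (s := range (n+1)) (t := range (n+1))
    (f := fun i j => Ee (n := n) i * ((-1 : MvPolynomial (Fin n) ℤ)^j * Ee j))]
  rw [← Finset.sum_filter_add_sum_filter_not ((range (n+1)) ×ˢ (range (n+1)))
    (fun p => p.1 < p.2)]
  rw [← Finset.sum_filter_add_sum_filter_not
    (((range (n+1)) ×ˢ (range (n+1))).filter (fun p => ¬ p.1 < p.2)) (fun p => p.2 < p.1)]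
  have hdiag : ∑ p ∈ ((((range (n+1)) ×ˢ (range (n+1))).filter (fun p => ¬ p.1 < p.2)).filter
      (fun p => ¬ p.2 < p.1)), Ee (n := n) p.1 * ((-1 : MvPolynomial (Fin n) ℤ)^p.2 * Ee p.2)
      = ∑ i ∈ range (n+1), (-1 : MvPolynomial (Fin n) ℤ)^i * (Ee i * Ee i) := by
    refine Finset.sum_nbij' (fun p => p.1) (fun i => (i, i)) ?_ ?_ ?_ ?_ ?_
    · intro p hp
      simp [mem_filter, Finset.mem_product, mem_range, Nat.even_iff] at hp ⊢ <;> omega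
    · intro i hi
      simp [mem_filter, Finset.mem_product, mem_range, Nat.even_iff] at hi ⊢ <;> omega
    · intro p hp
      simp only [mem_filter, Finset.mem_product, mem_range] at hp
      exact Prod.ext rfl (by dsimp only; omega)
    · intro i _ ; rfl
    · intro p hp
      simp only [mem_filter, Finset.mem_product, mem_range] at hp
      have h2 : p.2 = p.1 := by omega
      rw [h2]
      ring
  have hlower : ∑ p ∈ ((((range (n+1)) ×ˢ (range (n+1))).filter (fun p => ¬ p.1 < p.2)).filter
      (fun p => p.2 < p.1)), Ee (n := n) p.1 * ((-1 : MvPolynomial (Fin n) ℤ)^p.2 * Ee p.2)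
      = ∑ p ∈ (((range (n+1)) ×ˢ (range (n+1))).filter (fun p => p.1 < p.2)),
          Ee (n := n) p.2 * ((-1 : MvPolynomial (Fin n) ℤ)^p.1 * Ee p.1) := by
    refine Finset.sum_nbij' (fun p => (p.2, p.1)) (fun p => (p.2, p.1)) ?_ ?_ ?_ ?_ ?_
    · intro p hp
      simp [mem_filter, Finset.mem_product, mem_range, Nat.even_iff] at hp ⊢ <;> omega
    · intro p hp
      simp [mem_filter, Finset.mem_product, mem_range, Nat.even_iff] at hp ⊢ <;> omega
    · intro p _ ; rfl
    · intro p _ ; rfl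
    · intro p _ ; rfl
  rw [hdiag, hlower]
  have hoff : ∑ p ∈ (((range (n+1)) ×ˢ (range (n+1))).filter (fun p => p.1 < p.2)),
      (Ee (n := n) p.1 * ((-1 : MvPolynomial (Fin n) ℤ)^p.2 * Ee p.2)
        + Ee p.2 * ((-1 : MvPolynomial (Fin n) ℤ)^p.1 * Ee p.1))
      = ∑ p ∈ (((range (n+1)) ×ˢ (range (n+1))).filter (fun p => p.1 < p.2)),
        (if Even (p.2 - p.1) then
          (2 : MvPolynomial (Fin n) ℤ) * ((-1 : MvPolynomial (Fin n) ℤ)^p.1 * (Ee p.1 * Ee p.2))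
         else 0) := by
    apply Finset.sum_congr rfl
    intro p hp
    simp only [mem_filter, Finset.mem_product, mem_range] at hp
    have hsplit : p.2 = p.1 + (p.2 - p.1) := by omega
    rcases Nat.even_or_odd (p.2 - p.1) with hev | hod
    · rw [if_pos hev]
      rw [hsplit, pow_add, Even.neg_one_pow hev]
      ring
    · rw [if_neg (by simpa using hod)]
      rw [hsplit, pow_add, Odd.neg_one_pow hod]
      ring
  have hcomb : (∑ p ∈ (((range (n+1)) ×ˢ (range (n+1))).filter (fun p => p.1 < p.2)),
        Ee (n := n) p.1 * ((-1 : MvPolynomial (Fin n) ℤ)^p.2 * Ee p.2))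
      + (∑ p ∈ (((range (n+1)) ×ˢ (range (n+1))).filter (fun p => p.1 < p.2)),
        Ee (n := n) p.2 * ((-1 : MvPolynomial (Fin n) ℤ)^p.1 * Ee p.1))
      = (∑ p ∈ ((range (n+1)) ×ˢ (range (n+1))).filter
            (fun p => p.1 < p.2 ∧ Even (p.2 - p.1)),
            (-1 : MvPolynomial (Fin n) ℤ)^p.1 * (Ee p.1 * Ee p.2))
        + ∑ p ∈ ((range (n+1)) ×ˢ (range (n+1))).filter
            (fun p => p.1 < p.2 ∧ Even (p.2 - p.1)),
            (-1 : MvPolynomial (Fin n) ℤ)^p.1 * (Ee p.1 * Ee p.2) := by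
    rw [← Finset.sum_add_distrib, hoff, Finset.sum_ite, Finset.sum_const_zero, add_zero,
      Finset.filter_filter, ← Finset.sum_add_distrib]
    apply Finset.sum_congr rfl
    intro p _
    ring
  linear_combination hcomb

end ChAux

open ChAux

/-- `Σ_{b,c≥0 even} ( ch SST_n(λ(0,b,c)) − ch SST_n(λ(0,b,c+1)) )
  = ( Σ_{i=0}^{n} e_i ) · ( Σ_{i=0}^{n} (−1)^i e_i )` in `ℤ[x_1,…,x_n]`.
(When `a = 0` every tableau has residue `0`, so no residue condition is imposed; all but
finitely many summands vanish.) -/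
theorem ch_d_infinity_zero_diff (n : ℕ) (hn : 1 ≤ n) :
    (∑ᶠ (b : ℕ) (_ : Even b) (c : ℕ) (_ : Even c),
        (tabCh n 0 b c {T | IsTab n 0 b c T} -
          tabCh n 0 b (c + 1) {T | IsTab n 0 b (c + 1) T})) =
      (∑ i ∈ Finset.range (n + 1), esymm (Fin n) ℤ i) *
        (∑ i ∈ Finset.range (n + 1), (-1) ^ i * esymm (Fin n) ℤ i) := by
  classical
  have hinner : ∀ b : ℕ, (∑ᶠ (c : ℕ) (_ : Even c),
      (tabCh n 0 b c {T | IsTab n 0 b c T} -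
        tabCh n 0 b (c + 1) {T | IsTab n 0 b (c + 1) T}))
      = ∑ c ∈ range (n+1),
          (if Even c then goodCh (n := n) b c - goodCh b (c+1) else 0) := by
    intro b
    have h1 : ∀ c : ℕ, (∑ᶠ (_ : Even c),
        (tabCh n 0 b c {T | IsTab n 0 b c T} -
          tabCh n 0 b (c + 1) {T | IsTab n 0 b (c + 1) T}))
        = (if Even c then goodCh (n := n) b c - goodCh b (c+1) else 0) := by
      intro c
      rw [finsum_eq_if, tabCh_eq, tabCh_eq]
    rw [finsum_congr h1]
    apply finsum_eq_sum_of_support_subset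
    intro c hc
    rw [Function.mem_support] at hc
    rw [Finset.mem_coe, Finset.mem_range]
    by_contra hcn
    push_neg at hcn
    apply hc
    rw [goodCh_eq_zero (n := n) (b := b) (c := c) (Or.inl (by omega)),
      goodCh_eq_zero (n := n) (b := b) (c := c+1) (Or.inl (by omega))]
    simp
  have houter : ∀ b : ℕ, (∑ᶠ (_ : Even b), (∑ᶠ (c : ℕ) (_ : Even c),
      (tabCh n 0 b c {T | IsTab n 0 b c T} -
        tabCh n 0 b (c + 1) {T | IsTab n 0 b (c + 1) T})))
      = (if Even b then (∑ c ∈ range (n+1),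
          (if Even c then goodCh (n := n) b c - goodCh b (c+1) else 0)) else 0) := by
    intro b
    rw [finsum_eq_if, hinner b]
  rw [finsum_congr houter]
  rw [finsum_eq_sum_of_support_subset _ (s := range (n+1)) (by
    intro b hb
    rw [Function.mem_support] at hb
    rw [Finset.mem_coe, Finset.mem_range]
    by_contra hbn
    push_neg at hbn
    apply hb
    have hz : ∀ c ∈ range (n+1),
        (if Even c then goodCh (n := n) b c - goodCh b (c+1) else 0)
          = (0 : MvPolynomial (Fin n) ℤ) := by
      intro c _
      rw [goodCh_eq_zero (n := n) (b := b) (c := c) (Or.inr (by omega)),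
        goodCh_eq_zero (n := n) (b := b) (c := c+1) (Or.inr (by omega))]
      simp
    rw [Finset.sum_congr rfl hz, Finset.sum_const_zero]
    simp)]
  have hpayload : ∀ b ∈ range (n+1),
      (if Even b then (∑ c ∈ range (n+1),
        (if Even c then goodCh (n := n) b c - goodCh b (c+1) else 0)) else 0)
      = (if Even b then
          ∑ c ∈ range (n+1), (-1 : MvPolynomial (Fin n) ℤ)^c * (Ee c * Ee (b+c)) else 0)
        + (if Even b then
          ∑ c ∈ range (n+1), (-1 : MvPolynomial (Fin n) ℤ)^c * (Ee c * Ee (b+c+2)) else 0) := by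
    intro b _
    rw [inner_sum b]
    split
    · rfl
    · simp
  rw [Finset.sum_congr rfl hpayload, Finset.sum_add_distrib, SA_eq, SB_eq, add_assoc]
  exact (RHS_eq (n := n)).symm

end
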